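/- Let λ ⊢ n be a partition, r, r_1, r_2, ... positive integers, and k, k_1, k_2, ... integers. With F_n^{(r,k)} := (k/(rn+k))·[t^n] H(t)^{rn+k} in the ring of symmetric functions (H(t) = Σ h_n t^n), the Hall scalar product satisfies ⟨F_n^{(r,k)}, Π_i F_{λ_i}^{(r_i,k_i)}⟩ = (k/(rn+k)) · Π_i (k_i/(r_iλ_i+k_i)) · binom((rn+k)(r_iλ_i+k_i) + λ_i - 1, λ_i). -/

import Mathlib

noncomputable section

/-- A model of the ring of symmetric functions `Λ` over `ℚ`: the polynomial ring on the
(algebraically independent) power sums `p₁, p₂, …`. -/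
abbrev LambdaQ : Type := MvPolynomial {i : ℕ // 0 < i} ℚ

/-- The power sum `p_m` in the model (`p_0 = 1` by convention here; parts are positive). -/
def Pgen (m : ℕ) : LambdaQ :=
  if h : 0 < m then MvPolynomial.X ⟨m, h⟩ else 1

/-- `p_μ = p_{μ₁} p_{μ₂} ⋯` for a partition `μ`. -/
def pPart {n : ℕ} (μ : n.Partition) : LambdaQ := (μ.parts.map Pgen).prod

/-- `z_μ = ∏ i, i^{d_i(μ)} · d_i(μ)!`. -/
def zPart {n : ℕ} (μ : n.Partition) : ℚ :=
  ∏ i ∈ Finset.range (n + 1),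
    ((i : ℚ) ^ (μ.parts.count i) * ((μ.parts.count i).factorial : ℚ))

/-- The `z`-weight of a monomial exponent `d`, i.e. `z_λ` for the partition `λ` with
`d i` parts equal to `i`. -/
def zMon (d : {i : ℕ // 0 < i} →₀ ℕ) : ℚ :=
  d.prod fun i m => (i.val : ℚ) ^ m * (Nat.factorial m : ℚ)

/-- The Hall scalar product on symmetric functions, characterized by
`⟨p_λ, p_μ⟩ = z_λ δ_{λμ}`, computed in the model via monomials in the `p`'s. -/
def hall (f g : LambdaQ) : ℚ :=
  ∑ d ∈ f.support, f.coeff d * g.coeff d * zMon d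

/-- `F_n^{(r,k)} = k · Σ_{λ ⊢ n} z_λ⁻¹ (rn+k)^{ℓ(λ)-1} p_λ`
(equivalently `(k/(rn+k))·[tⁿ] H(t)^{rn+k}`), defined for any integer `k`. -/
def Frk (r : ℕ) (k : ℤ) (n : ℕ) : LambdaQ :=
  (k : ℚ) • ∑ μ : n.Partition,
    ((zPart μ)⁻¹ * ((((r * n : ℤ) + k : ℤ) : ℚ)) ^ (μ.parts.card - 1)) • pPart μ

/-! ### The multiset `z`-function -/

/-- `z` of a multiset of parts. -/
def zM (s : Multiset ℕ) : ℚ :=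
  ∏ i ∈ s.toFinset, ((i : ℚ) ^ (s.count i) * ((s.count i).factorial : ℚ))

@[simp] lemma zM_zero : zM 0 = 1 := by simp [zM]

lemma zM_cons (j : ℕ) (s : Multiset ℕ) :
    zM (j ::ₘ s) = ((j : ℚ) * (s.count j + 1)) * zM s := by
  classical
  unfold zM
  rw [Multiset.toFinset_cons]
  by_cases hj : j ∈ s.toFinset
  · have key := Finset.mul_prod_erase s.toFinset
      (fun i : ℕ => ((i : ℚ) ^ ((j ::ₘ s).count i) * (((j ::ₘ s).count i).factorial : ℚ))) hj
    have key2 := Finset.mul_prod_erase s.toFinset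
      (fun i : ℕ => ((i : ℚ) ^ (s.count i) * ((s.count i).factorial : ℚ))) hj
    rw [Finset.insert_eq_self.2 hj, ← key, ← key2]
    have h1 : ∀ i ∈ s.toFinset.erase j,
        ((i : ℚ) ^ ((j ::ₘ s).count i) * (((j ::ₘ s).count i).factorial : ℚ))
          = ((i : ℚ) ^ (s.count i) * ((s.count i).factorial : ℚ)) := by
      intro i hi
      rw [Multiset.count_cons_of_ne (Finset.ne_of_mem_erase hi)]
    rw [Finset.prod_congr rfl h1]
    simp only [Multiset.count_cons_self]
    push_cast [Nat.factorial_succ]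
    ring
  · have hj0 : s.count j = 0 := by
      rw [Multiset.count_eq_zero]
      exact fun h => hj (Multiset.mem_toFinset.2 h)
    rw [Finset.prod_insert hj]
    simp only [Multiset.count_cons_self, hj0]
    have h1 : ∀ i ∈ s.toFinset,
        ((i : ℚ) ^ ((j ::ₘ s).count i) * (((j ::ₘ s).count i).factorial : ℚ))
          = ((i : ℚ) ^ (s.count i) * ((s.count i).factorial : ℚ)) := by
      intro i hi
      rw [Multiset.count_cons_of_ne (by rintro rfl; exact hj hi)]
    rw [Finset.prod_congr rfl h1]
    norm_num [Nat.factorial]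

lemma zM_ne_zero (s : Multiset ℕ) (hs : ∀ i ∈ s, 0 < i) : zM s ≠ 0 := by
  unfold zM
  apply Finset.prod_ne_zero_iff.2
  intro i hi
  have hipos : 0 < i := hs i (Multiset.mem_toFinset.1 hi)
  positivity

lemma zPart_eq_zM {n : ℕ} (μ : n.Partition) : zPart μ = zM μ.parts := by
  unfold zPart zM
  refine (Finset.prod_subset ?_ ?_).symm
  · intro i hi
    have hmem : i ∈ μ.parts := Multiset.mem_toFinset.1 hi
    have : i ≤ n := by
      have h := Multiset.single_le_sum (fun x (_ : x ∈ μ.parts) => Nat.zero_le x) _ hmem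
      simpa [μ.parts_sum] using h
    exact Finset.mem_range.2 (Nat.lt_succ_of_le this)
  · intro i _ hi
    have : μ.parts.count i = 0 := by
      rw [Multiset.count_eq_zero]
      exact fun h => hi (Multiset.mem_toFinset.2 h)
    simp [this]

lemma zPart_ne_zero {n : ℕ} (μ : n.Partition) : zPart μ ≠ 0 := by
  rw [zPart_eq_zM]
  exact zM_ne_zero _ (fun i hi => μ.parts_pos hi)
/-! ### Monomial encoding of partitions -/

/-- The exponent finsupp of a multiset of positive parts. -/
def msD (s : Multiset ℕ) : {i : ℕ // 0 < i} →₀ ℕ where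
  support := s.toFinset.subtype (0 < ·)
  toFun := fun i => s.count i.1
  mem_support_toFun := by
    intro i
    simp only [Finset.mem_subtype, Multiset.mem_toFinset, ← Multiset.count_pos]
    omega

@[simp] lemma msD_apply (s : Multiset ℕ) (i : {i : ℕ // 0 < i}) : msD s i = s.count i.1 := rfl

@[simp] lemma msD_zero : msD 0 = 0 := by
  ext i; simp

lemma msD_cons (j : ℕ) (hj : 0 < j) (s : Multiset ℕ) :
    msD (j ::ₘ s) = Finsupp.single ⟨j, hj⟩ 1 + msD s := by
  ext i
  rw [Finsupp.add_apply, msD_apply, msD_apply, Multiset.count_cons]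
  rcases eq_or_ne i ⟨j, hj⟩ with rfl | hi
  · simp [add_comm]
  · have : i.1 ≠ j := fun h => hi (Subtype.ext h)
    simp [Finsupp.single_apply, hi.symm, this, Ne.symm this]

lemma msD_inj {s t : Multiset ℕ} (hs : ∀ i ∈ s, 0 < i) (ht : ∀ i ∈ t, 0 < i)
    (h : msD s = msD t) : s = t := by
  ext i
  rcases Nat.eq_zero_or_pos i with rfl | hi
  · rw [Multiset.count_eq_zero.2 (fun hc => absurd (hs 0 hc) (lt_irrefl 0)),
      Multiset.count_eq_zero.2 (fun hc => absurd (ht 0 hc) (lt_irrefl 0))]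
  · have := congrArg (fun d => d ⟨i, hi⟩) h
    simpa using this

lemma pPart_eq_monomial' (s : Multiset ℕ) (hs : ∀ i ∈ s, 0 < i) :
    (s.map Pgen).prod = MvPolynomial.monomial (msD s) (1 : ℚ) := by
  induction s using Multiset.induction with
  | empty => simp [MvPolynomial.monomial_zero']
  | cons j s ih =>
    have hj : 0 < j := hs j (Multiset.mem_cons_self _ _)
    have hs' : ∀ i ∈ s, 0 < i := fun i hi => hs i (Multiset.mem_cons_of_mem hi)
    rw [Multiset.map_cons, Multiset.prod_cons, ih hs', msD_cons j hj]
    have : Pgen j = MvPolynomial.monomial (Finsupp.single ⟨j, hj⟩ 1) (1 : ℚ) := by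
      rw [Pgen, dif_pos hj, MvPolynomial.X]
    rw [this, MvPolynomial.monomial_mul, one_mul]

lemma pPart_eq_monomial {n : ℕ} (μ : n.Partition) :
    pPart μ = MvPolynomial.monomial (msD μ.parts) (1 : ℚ) :=
  pPart_eq_monomial' μ.parts (fun _ hi => μ.parts_pos hi)

lemma zMon_msD (s : Multiset ℕ) (hs : ∀ i ∈ s, 0 < i) : zMon (msD s) = zM s := by
  unfold zMon zM Finsupp.prod
  refine Finset.prod_bij (fun (a : {i : ℕ // 0 < i}) _ => a.1) ?_ ?_ ?_ ?_
  · intro a ha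
    exact Finset.mem_subtype.1 ha
  · intro a _ b _ hab
    exact Subtype.ext hab
  · intro b hb
    have hbs : b ∈ s := Multiset.mem_toFinset.1 hb
    exact ⟨⟨b, hs b hbs⟩, Finset.mem_subtype.2 hb, rfl⟩
  · intro a _
    rfl

lemma msD_parts_inj {n : ℕ} {μ ν : n.Partition} (h : msD μ.parts = msD ν.parts) : μ = ν :=
  Nat.Partition.ext (msD_inj (fun _ hi => μ.parts_pos hi) (fun _ hi => ν.parts_pos hi) h)
/-! ### The evaluation map `φ_x : p_j ↦ x` -/

def phiEv (x : ℚ) : LambdaQ →ₐ[ℚ] ℚ := MvPolynomial.aeval (fun _ => x)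

lemma phiEv_pPart (x : ℚ) {n : ℕ} (μ : n.Partition) :
    phiEv x (pPart μ) = x ^ μ.parts.card := by
  unfold pPart phiEv
  rw [map_multiset_prod, Multiset.map_map]
  have : ∀ j ∈ μ.parts, (MvPolynomial.aeval (fun _ => x) ∘ Pgen) j = x := by
    intro j hj
    have hjp : 0 < j := μ.parts_pos hj
    simp [Pgen, dif_pos hjp]
  rw [Multiset.map_congr rfl this, Multiset.map_const', Multiset.prod_replicate]

lemma phiEv_Frk (x : ℚ) (r : ℕ) (k : ℤ) (n : ℕ) :
    phiEv x (Frk r k n) = (k : ℚ) * ∑ μ : n.Partition,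
      (zPart μ)⁻¹ * ((((r * n : ℤ) + k : ℤ) : ℚ)) ^ (μ.parts.card - 1) * x ^ μ.parts.card := by
  unfold Frk
  rw [map_smul, map_sum]
  rw [smul_eq_mul]
  congr 1
  refine Finset.sum_congr rfl (fun μ _ => ?_)
  rw [map_smul, smul_eq_mul, phiEv_pPart]

/-! ### Linearity of `hall` -/

lemma hall_congr_support (f g : LambdaQ) (S : Finset ({i : ℕ // 0 < i} →₀ ℕ))
    (hS : f.support ⊆ S) :
    hall f g = ∑ d ∈ S, f.coeff d * g.coeff d * zMon d := by
  unfold hall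
  refine Finset.sum_subset hS (fun d _ hd => ?_)
  rw [MvPolynomial.notMem_support_iff.1 hd]
  ring

lemma hall_add_right (f g h : LambdaQ) : hall f (g + h) = hall f g + hall f h := by
  unfold hall
  rw [← Finset.sum_add_distrib]
  refine Finset.sum_congr rfl (fun d _ => ?_)
  rw [MvPolynomial.coeff_add]
  ring

lemma hall_smul_right (f : LambdaQ) (c : ℚ) (g : LambdaQ) :
    hall f (c • g) = c * hall f g := by
  unfold hall
  rw [Finset.mul_sum]
  refine Finset.sum_congr rfl (fun d _ => ?_)
  rw [MvPolynomial.coeff_smul, smul_eq_mul]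
  ring

lemma hall_zero_right (f : LambdaQ) : hall f 0 = 0 := by
  unfold hall
  simp

/-! ### `hall (Frk r k n) · = (k/a) * φ_a ·` on the span of the `p_κ` -/

lemma Frk_coeff (r : ℕ) (k : ℤ) (n : ℕ) (κ : n.Partition) :
    (Frk r k n).coeff (msD κ.parts)
      = (k : ℚ) * ((zPart κ)⁻¹ * ((((r * n : ℤ) + k : ℤ) : ℚ)) ^ (κ.parts.card - 1)) := by
  unfold Frk
  rw [MvPolynomial.coeff_smul, smul_eq_mul]
  congr 1
  rw [MvPolynomial.coeff_sum]
  rw [Finset.sum_eq_single κ]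
  · rw [MvPolynomial.coeff_smul, pPart_eq_monomial, MvPolynomial.coeff_monomial,
      if_pos rfl, smul_eq_mul, mul_one]
  · intro μ _ hμ
    rw [MvPolynomial.coeff_smul, pPart_eq_monomial, MvPolynomial.coeff_monomial,
      if_neg (fun h => hμ (msD_parts_inj h)), smul_eq_mul, mul_zero]
  · intro h
    exact absurd (Finset.mem_univ κ) h

lemma Frk_support (r : ℕ) (k : ℤ) (n : ℕ) :
    (Frk r k n).support ⊆ Finset.image (fun μ : n.Partition => msD μ.parts) Finset.univ := by
  intro d hd
  by_contra hmem
  apply MvPolynomial.mem_support_iff.1 hd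
  unfold Frk
  rw [MvPolynomial.coeff_smul, MvPolynomial.coeff_sum, Finset.sum_eq_zero, smul_zero]
  intro μ _
  rw [MvPolynomial.coeff_smul, pPart_eq_monomial, MvPolynomial.coeff_monomial, if_neg, smul_zero]
  intro h
  exact hmem (Finset.mem_image.2 ⟨μ, Finset.mem_univ μ, h⟩)

lemma hall_Frk_pPart (r : ℕ) (k : ℤ) (n : ℕ) (hn : 0 < n)
    (hk : ((((r * n : ℤ) + k : ℤ) : ℚ)) ≠ 0) (κ : n.Partition) :
    hall (Frk r k n) (pPart κ)
      = ((k : ℚ) / ((((r * n : ℤ) + k : ℤ) : ℚ))) * phiEv ((((r * n : ℤ) + k : ℤ) : ℚ)) (pPart κ) := by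
  set a : ℚ := (((r * n : ℤ) + k : ℤ) : ℚ) with ha
  rw [phiEv_pPart]
  rw [hall_congr_support _ _ _ (Frk_support r k n)]
  rw [Finset.sum_image (fun μ _ ν _ h => msD_parts_inj h)]
  rw [Finset.sum_eq_single κ]
  · rw [Frk_coeff, pPart_eq_monomial, MvPolynomial.coeff_monomial, if_pos rfl,
      zMon_msD _ (fun _ hi => κ.parts_pos hi), ← zPart_eq_zM]
    have hz : zPart κ ≠ 0 := zPart_ne_zero κ
    have hcard : κ.parts.card ≠ 0 := by
      intro h
      have : κ.parts = 0 := Multiset.card_eq_zero.1 h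
      rw [← κ.parts_sum, this] at hn
      simp at hn
    have hpow : a ^ κ.parts.card = a ^ (κ.parts.card - 1) * a := by
      rw [← pow_succ]
      congr 1
      omega
    rw [hpow]
    field_simp
    rw [ha]
  · intro μ _ hμ
    rw [pPart_eq_monomial, MvPolynomial.coeff_monomial,
      if_neg (fun h => hμ (msD_parts_inj h.symm))]
    ring
  · intro h
    exact absurd (Finset.mem_univ κ) h

lemma hall_Frk_span (r : ℕ) (k : ℤ) (n : ℕ) (hn : 0 < n)
    (hk : ((((r * n : ℤ) + k : ℤ) : ℚ)) ≠ 0) (g : LambdaQ)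
    (hg : g ∈ Submodule.span ℚ (Set.range (pPart (n := n)))) :
    hall (Frk r k n) g
      = ((k : ℚ) / ((((r * n : ℤ) + k : ℤ) : ℚ))) * phiEv ((((r * n : ℤ) + k : ℤ) : ℚ)) g := by
  induction hg using Submodule.span_induction with
  | mem x hx =>
    obtain ⟨κ, rfl⟩ := hx
    exact hall_Frk_pPart r k n hn hk κ
  | zero => rw [hall_zero_right, map_zero, mul_zero]
  | add x y _ _ hx hy => rw [hall_add_right, map_add, hx, hy, mul_add]
  | smul c x _ hx =>
    rw [hall_smul_right, map_smul, hx]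
    simp only [smul_eq_mul]
    ring
/-! ### The product of the `F`'s lies in the span of the `p_κ`, `κ ⊢ n` -/

/-- Joining a family of partitions into one partition of the total. -/
def joinP {m n : ℕ} (lam : Fin m → ℕ) (hsum : ∑ i, lam i = n)
    (ν : ∀ i, (lam i).Partition) : n.Partition where
  parts := ∑ i, (ν i).parts
  parts_pos := by
    intro a ha
    rw [Multiset.mem_sum] at ha
    obtain ⟨i, _, hi⟩ := ha
    exact (ν i).parts_pos hi
  parts_sum := by
    rw [← hsum]
    have h := map_sum Multiset.sumAddMonoidHom (fun i => (ν i).parts) Finset.univ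
    simp only [show (Multiset.sumAddMonoidHom : Multiset ℕ → ℕ) = Multiset.sum from
      Multiset.coe_sumAddMonoidHom] at h
    rw [h]
    exact Finset.sum_congr rfl (fun i _ => (ν i).parts_sum)

lemma prod_smul_lambda {ι : Type*} (t : Finset ι) (c : ι → ℚ) (f : ι → LambdaQ) :
    ∏ i ∈ t, c i • f i = (∏ i ∈ t, c i) • ∏ i ∈ t, f i := by
  induction t using Finset.cons_induction with
  | empty => simp
  | cons a t ha ih =>
    rw [Finset.prod_cons, Finset.prod_cons, Finset.prod_cons, ih, smul_mul_smul_comm]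

lemma prod_map_msum {ι : Type*} (t : Finset ι) (s : ι → Multiset ℕ) :
    (((∑ i ∈ t, s i).map Pgen).prod : LambdaQ) = ∏ i ∈ t, ((s i).map Pgen).prod := by
  induction t using Finset.cons_induction with
  | empty => simp
  | cons a t ha ih => rw [Finset.sum_cons, Finset.prod_cons, Multiset.map_add,
      Multiset.prod_add, ih]

lemma pPart_joinP {m n : ℕ} (lam : Fin m → ℕ) (hsum : ∑ i, lam i = n)
    (ν : ∀ i, (lam i).Partition) :
    pPart (joinP lam hsum ν) = ∏ i, pPart (ν i) := by
  unfold pPart joinP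
  exact prod_map_msum Finset.univ (fun i => (ν i).parts)

lemma Frk_eq_sum (r : ℕ) (k : ℤ) (n : ℕ) :
    Frk r k n = ∑ μ : n.Partition,
      ((k : ℚ) * ((zPart μ)⁻¹ * ((((r * n : ℤ) + k : ℤ) : ℚ)) ^ (μ.parts.card - 1))) • pPart μ := by
  unfold Frk
  rw [Finset.smul_sum]
  exact Finset.sum_congr rfl (fun μ _ => by rw [smul_smul])

lemma prod_Frk_mem_span {m n : ℕ} (lam : Fin m → ℕ) (hsum : ∑ i, lam i = n)
    (rs : Fin m → ℕ) (ks : Fin m → ℤ) :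
    (∏ i, Frk (rs i) (ks i) (lam i)) ∈
      Submodule.span ℚ (Set.range (pPart (n := n))) := by
  have : (∏ i, Frk (rs i) (ks i) (lam i))
      = ∑ ν ∈ Fintype.piFinset (fun i : Fin m => (Finset.univ : Finset ((lam i).Partition))),
          (∏ i, ((ks i : ℚ) * ((zPart (ν i))⁻¹ *
            ((((rs i * lam i : ℤ) + ks i : ℤ) : ℚ)) ^ ((ν i).parts.card - 1)))) •
          pPart (joinP lam hsum ν) := by
    calc (∏ i, Frk (rs i) (ks i) (lam i))
        = ∏ i, ∑ μ : (lam i).Partition,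
            ((ks i : ℚ) * ((zPart μ)⁻¹ *
              ((((rs i * lam i : ℤ) + ks i : ℤ) : ℚ)) ^ (μ.parts.card - 1))) • pPart μ := by
          exact Finset.prod_congr rfl (fun i _ => Frk_eq_sum (rs i) (ks i) (lam i))
      _ = ∑ ν ∈ Fintype.piFinset (fun i : Fin m => (Finset.univ : Finset ((lam i).Partition))),
            ∏ i, ((ks i : ℚ) * ((zPart (ν i))⁻¹ *
              ((((rs i * lam i : ℤ) + ks i : ℤ) : ℚ)) ^ ((ν i).parts.card - 1))) • pPart (ν i) := by
          rw [Finset.prod_univ_sum]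
      _ = _ := by
          refine Finset.sum_congr rfl (fun ν _ => ?_)
          rw [pPart_joinP lam hsum ν, prod_smul_lambda _ _ _]
  rw [this]
  refine Submodule.sum_mem _ (fun ν _ => ?_)
  exact Submodule.smul_mem _ _ (Submodule.subset_span ⟨joinP lam hsum ν, rfl⟩)
/-! ### The generating identity `∑_{μ ⊢ N} z_μ⁻¹ y^{ℓ(μ)} = binom(y+N-1, N)` -/

def ascProd (y : ℚ) (N : ℕ) : ℚ := ∏ i ∈ Finset.range N, (y + i)

def cconst (N : ℕ) (y : ℚ) : ℚ :=
  ∑ μ : N.Partition, (zM μ.parts)⁻¹ * y ^ (Multiset.card μ.parts)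

lemma parts_of_zero (μ : Nat.Partition 0) : μ.parts = 0 := by
  apply Multiset.eq_zero_of_forall_notMem
  intro a ha
  have h1 : 0 < a := μ.parts_pos ha
  have h2 : a ≤ μ.parts.sum := Multiset.single_le_sum (fun x _ => Nat.zero_le x) _ ha
  rw [μ.parts_sum] at h2
  omega

lemma cconst_zero (y : ℚ) : cconst 0 y = 1 := by
  unfold cconst
  rw [Finset.univ_unique, Finset.sum_singleton, parts_of_zero]
  simp

/-- Adding a part `j` to a partition of `N - j`. -/
def addPart {N : ℕ} (j : ℕ) (hj : 0 < j) (hjN : j ≤ N) (ν : (N - j).Partition) :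
    N.Partition where
  parts := j ::ₘ ν.parts
  parts_pos := by
    intro a ha
    rcases Multiset.mem_cons.1 ha with rfl | h
    · exact hj
    · exact ν.parts_pos h
  parts_sum := by
    rw [Multiset.sum_cons, ν.parts_sum]
    omega

lemma sum_part_remove (y : ℚ) (N j : ℕ) (hj : 0 < j) (hjN : j ≤ N) :
    ∑ μ : N.Partition,
        ((j : ℚ) * (μ.parts.count j)) * ((zM μ.parts)⁻¹ * y ^ (Multiset.card μ.parts))
      = y * cconst (N - j) y := by
  rw [cconst, Finset.mul_sum]
  rw [← Finset.sum_filter_of_ne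
    (p := fun μ : N.Partition => j ∈ μ.parts) (s := Finset.univ)
    (f := fun μ : N.Partition =>
      ((j : ℚ) * (μ.parts.count j)) * ((zM μ.parts)⁻¹ * y ^ (Multiset.card μ.parts)))
    ?_]
  · symm
    refine Finset.sum_bij (fun ν _ => addPart j hj hjN ν) ?_ ?_ ?_ ?_
    · intro ν _
      refine Finset.mem_filter.2 ⟨Finset.mem_univ _, ?_⟩
      exact Multiset.mem_cons_self _ _
    · intro ν1 _ ν2 _ h
      have := congrArg Nat.Partition.parts h
      simp only [addPart] at this
      exact Nat.Partition.ext ((Multiset.cons_inj_right j).1 this)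
    · intro μ hμ
      have hjμ : j ∈ μ.parts := (Finset.mem_filter.1 hμ).2
      refine ⟨⟨μ.parts.erase j, ?_, ?_⟩, Finset.mem_univ _, ?_⟩
      · intro a ha
        exact μ.parts_pos (Multiset.mem_of_mem_erase ha)
      · have h1 := Multiset.cons_erase hjμ
        have h2 := congrArg Multiset.sum h1
        rw [Multiset.sum_cons, μ.parts_sum] at h2
        omega
      · apply Nat.Partition.ext
        exact Multiset.cons_erase hjμ
    · intro ν _
      simp only [addPart, Multiset.count_cons_self, Multiset.card_cons, zM_cons]
      have hz := zM_ne_zero ν.parts (fun i hi => ν.parts_pos hi)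
      have hA : (j : ℚ) * ((ν.parts.count j : ℚ) + 1) ≠ 0 := by positivity
      push_cast
      rw [mul_inv]
      field_simp
      ring
  · intro μ _ hne
    by_contra hmem
    apply hne
    rw [Multiset.count_eq_zero.2 hmem]
    push_cast
    ring

lemma multiset_sum_count (s : Multiset ℕ) (hpos : ∀ i ∈ s, 0 < i) (N : ℕ) (hs : s.sum = N) :
    N = ∑ j ∈ Finset.Icc 1 N, j * s.count j := by
  have h1 : s.sum = ∑ a ∈ s.toFinset, a * s.count a := by
    conv_lhs => rw [← Multiset.toFinset_sum_count_nsmul_eq s]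
    have h := map_sum Multiset.sumAddMonoidHom
      (fun a => s.count a • ({a} : Multiset ℕ)) s.toFinset
    simp only [show (Multiset.sumAddMonoidHom : Multiset ℕ → ℕ) = Multiset.sum from
      Multiset.coe_sumAddMonoidHom] at h
    rw [h]
    refine Finset.sum_congr rfl (fun a _ => ?_)
    rw [Multiset.sum_nsmul, Multiset.sum_singleton, smul_eq_mul, mul_comm]
  rw [← hs, h1]
  refine Finset.sum_subset ?_ ?_
  · intro a ha
    have hmem : a ∈ s := Multiset.mem_toFinset.1 ha
    have h2 : a ≤ s.sum := Multiset.single_le_sum (fun x _ => Nat.zero_le x) _ hmem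
    refine Finset.mem_Icc.2 ⟨hpos a hmem, by omega⟩
  · intro a _ ha
    rw [Multiset.count_eq_zero.2 (fun h => ha (Multiset.mem_toFinset.2 h)), mul_zero]

lemma cconst_rec (y : ℚ) (N : ℕ) (hN : 0 < N) :
    (N : ℚ) * cconst N y = y * ∑ j ∈ Finset.Icc 1 N, cconst (N - j) y := by
  rw [cconst, Finset.mul_sum]
  have expand : ∀ μ : N.Partition,
      (N : ℚ) * ((zM μ.parts)⁻¹ * y ^ (Multiset.card μ.parts))
        = ∑ j ∈ Finset.Icc 1 N,
            ((j : ℚ) * (μ.parts.count j)) * ((zM μ.parts)⁻¹ * y ^ (Multiset.card μ.parts)) := by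
    intro μ
    have h := multiset_sum_count μ.parts (fun i hi => μ.parts_pos hi) N μ.parts_sum
    have h' : (N : ℚ) = ∑ j ∈ Finset.Icc 1 N, (j : ℚ) * (μ.parts.count j : ℚ) := by
      exact_mod_cast h
    rw [h', Finset.sum_mul]
  rw [Finset.sum_congr rfl (fun μ _ => expand μ), Finset.sum_comm]
  rw [Finset.mul_sum]
  refine Finset.sum_congr rfl (fun j hj => ?_)
  have hj1 : 0 < j := (Finset.mem_Icc.1 hj).1
  have hj2 : j ≤ N := (Finset.mem_Icc.1 hj).2
  exact sum_part_remove y N j hj1 hj2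

lemma asc_hockey (y : ℚ) (N : ℕ) (hN : 0 < N) :
    ascProd y N / ((N - 1).factorial : ℚ)
      = y * ∑ s ∈ Finset.range N, ascProd y s / (s.factorial : ℚ) := by
  induction N with
  | zero => omega
  | succ M ih =>
    rcases Nat.eq_zero_or_pos M with rfl | hM
    · simp [ascProd]
    · rw [Finset.sum_range_succ, mul_add, ← ih hM]
      have hfac : ((M - 1).factorial : ℚ) * (M : ℚ) = (M.factorial : ℚ) := by
        rw_mod_cast [mul_comm, Nat.mul_factorial_pred hM.ne']
      have h1 : (M + 1 - 1 : ℕ) = M := by omega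
      rw [h1]
      have hprod : ascProd y (M + 1) = ascProd y M * (y + M) := by
        rw [ascProd, ascProd, Finset.prod_range_succ]
      rw [hprod]
      have hf1 : ((M - 1).factorial : ℚ) ≠ 0 := Nat.cast_ne_zero.2 (Nat.factorial_ne_zero _)
      have hf2 : ((M).factorial : ℚ) ≠ 0 := Nat.cast_ne_zero.2 (Nat.factorial_ne_zero _)
      have key : ascProd y M / ((M - 1).factorial : ℚ)
          = ascProd y M * M / (M.factorial : ℚ) := by
        rw [div_eq_div_iff hf1 hf2]
        linear_combination -(ascProd y M * hfac)
      rw [key]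
      field_simp
      ring

lemma cconst_eq_ascProd (y : ℚ) (N : ℕ) :
    cconst N y = ascProd y N / (N.factorial : ℚ) := by
  induction N using Nat.strong_induction_on with
  | _ N ih =>
    rcases Nat.eq_zero_or_pos N with rfl | hN
    · rw [cconst_zero]
      simp [ascProd]
    · have hrec := cconst_rec y N hN
      have h1 : ∑ j ∈ Finset.Icc 1 N, cconst (N - j) y
          = ∑ j ∈ Finset.Icc 1 N, ascProd y (N - j) / ((N - j).factorial : ℚ) := by
        refine Finset.sum_congr rfl (fun j hj => ?_)
        have hj1 : 0 < j := (Finset.mem_Icc.1 hj).1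
        exact ih (N - j) (by omega)
      have h2 : ∑ j ∈ Finset.Icc 1 N, ascProd y (N - j) / ((N - j).factorial : ℚ)
          = ∑ s ∈ Finset.range N, ascProd y s / (s.factorial : ℚ) := by
        refine Finset.sum_nbij' (fun j => N - j) (fun s => N - s) ?_ ?_ ?_ ?_ ?_
        · intro j hj
          have := Finset.mem_Icc.1 hj
          exact Finset.mem_range.2 (by omega)
        · intro s hs
          have := Finset.mem_range.1 hs
          exact Finset.mem_Icc.2 (by omega)
        · intro j hj
          have := Finset.mem_Icc.1 hj
          omega
        · intro s hs
          have := Finset.mem_range.1 hs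
          omega
        · intro j _
          rfl
      rw [h1, h2, ← asc_hockey y N hN] at hrec
      have hNQ : (N : ℚ) ≠ 0 := Nat.cast_ne_zero.2 (by omega)
      have hfac : ((N - 1).factorial : ℚ) * (N : ℚ) = (N.factorial : ℚ) := by
        rw_mod_cast [mul_comm, Nat.mul_factorial_pred hN.ne']
      have hf1 : ((N - 1).factorial : ℚ) ≠ 0 := Nat.cast_ne_zero.2 (Nat.factorial_ne_zero _)
      have hf2 : ((N).factorial : ℚ) ≠ 0 := Nat.cast_ne_zero.2 (Nat.factorial_ne_zero _)
      rw [eq_div_iff hf2]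
      rw [eq_div_iff hf1] at hrec
      linear_combination hrec - cconst N y * hfac
/-! ### `Ring.choose` via the ascending product -/

lemma descPoch_smeval (x : ℚ) : ∀ M : ℕ,
    Polynomial.smeval (descPochhammer ℤ M) x = ∏ i ∈ Finset.range M, (x - i)
  | 0 => by
    rw [descPochhammer_zero, Finset.range_zero, Finset.prod_empty]
    simp [Polynomial.smeval_one]
  | M + 1 => by
    rw [descPochhammer_succ_right, Polynomial.smeval_mul, descPoch_smeval x M,
      Finset.prod_range_succ]
    congr 1
    rw [Polynomial.smeval_sub, Polynomial.smeval_X]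
    have : ((M : Polynomial ℤ)).smeval x = (M : ℚ) := by
      rw [Polynomial.smeval_natCast]
      simp
    rw [this]
    simp

lemma ringChoose_eq_ascProd (x : ℚ) (N : ℕ) :
    Ring.choose (x + N - 1) N = ascProd x N / (N.factorial : ℚ) := by
  have h := Ring.descPochhammer_eq_factorial_smul_choose (R := ℚ) (x + N - 1) N
  rw [descPoch_smeval] at h
  have hprod : ∏ i ∈ Finset.range N, (x + N - 1 - i) = ascProd x N := by
    rw [ascProd, ← Finset.prod_range_reflect]
    refine Finset.prod_congr rfl (fun i hi => ?_)
    have hi' : i < N := Finset.mem_range.1 hi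
    have : ((N - 1 - i : ℕ) : ℚ) = (N : ℚ) - 1 - i := by
      push_cast [Nat.cast_sub (by omega : i ≤ N - 1), Nat.cast_sub (by omega : 1 ≤ N)]
      ring
    rw [this]
    ring
  rw [hprod] at h
  rw [h, nsmul_eq_mul, mul_comm, mul_div_assoc,
    div_self (Nat.cast_ne_zero.2 (Nat.factorial_ne_zero N) : (N.factorial : ℚ) ≠ 0), mul_one]

lemma cconst_eq_ringChoose (x : ℚ) (N : ℕ) :
    cconst N x = Ring.choose (x + N - 1) N := by
  rw [ringChoose_eq_ascProd, cconst_eq_ascProd]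
/-! ### Main theorem -/

set_option maxHeartbeats 2000000 in
/-- The Hall scalar product
`⟨F_n^{(r,k)}, Π_i F_{λ_i}^{(r_i,k_i)}⟩
  = (k/(rn+k)) · Π_i (k_i/(r_iλ_i+k_i)) · binom((rn+k)(r_iλ_i+k_i)+λ_i-1, λ_i)`,
for a partition `λ = (λ₁, …, λ_m) ⊢ n`, positive integers `r, r_i`, and integers
`k, k_i` with nonzero denominators. -/
theorem stmt18 (n m : ℕ) (hn : 0 < n)
    (lam : Fin m → ℕ) (hlam : ∀ i, 0 < lam i) (hlam' : Antitone lam)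
    (hsum : ∑ i, lam i = n)
    (r : ℕ) (hr : 0 < r) (rs : Fin m → ℕ) (hrs : ∀ i, 0 < rs i)
    (k : ℤ) (ks : Fin m → ℤ)
    (hk : ((r * n : ℤ) + k) ≠ 0) (hks : ∀ i, ((rs i * lam i : ℤ) + ks i) ≠ 0) :
    hall (Frk r k n) (∏ i, Frk (rs i) (ks i) (lam i))
      = ((k : ℚ) / (((r * n : ℤ) + k : ℤ) : ℚ)) *
        ∏ i, ((ks i : ℚ) / (((rs i * lam i : ℤ) + ks i : ℤ) : ℚ)) *
          Ring.choose
            (((((r * n : ℤ) + k) * ((rs i * lam i : ℤ) + ks i) : ℤ) : ℚ) + lam i - 1)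
            (lam i) := by
  have ha : ((((r * n : ℤ) + k : ℤ) : ℚ)) ≠ 0 := Int.cast_ne_zero.2 hk
  rw [hall_Frk_span r k n hn ha _ (prod_Frk_mem_span lam hsum rs ks), map_prod]
  congr 1
  refine Finset.prod_congr rfl (fun i _ => ?_)
  rw [phiEv_Frk]
  set a : ℚ := (((r * n : ℤ) + k : ℤ) : ℚ) with ha'
  set b : ℚ := (((rs i * lam i : ℤ) + ks i : ℤ) : ℚ) with hb'
  have hb : b ≠ 0 := Int.cast_ne_zero.2 (hks i)
  have hcast : ((((r * n : ℤ) + k) * ((rs i * lam i : ℤ) + ks i) : ℤ) : ℚ) = a * b := by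
    rw [ha', hb']
    push_cast
    ring
  rw [hcast, ← cconst_eq_ringChoose (a * b) (lam i), cconst, Finset.mul_sum, Finset.mul_sum]
  refine Finset.sum_congr rfl (fun μ _ => ?_)
  rw [zPart_eq_zM]
  have hz := zM_ne_zero μ.parts (fun t ht => μ.parts_pos ht)
  have hcard : Multiset.card μ.parts ≠ 0 := by
    intro h0
    have h0' : μ.parts = 0 := Multiset.card_eq_zero.1 h0
    have hps := μ.parts_sum
    rw [h0'] at hps
    simp only [Multiset.sum_zero] at hps
    have := hlam i
    omega
  have hpow : (a * b) ^ (Multiset.card μ.parts)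
      = a ^ (Multiset.card μ.parts) * (b ^ (Multiset.card μ.parts - 1) * b) := by
    rw [mul_pow]
    congr 1
    rw [← pow_succ]
    congr 1
    omega
  rw [hpow]
  field_simp
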